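/- Equivalence of solution diagrams: in the setting of the final-coalgebra-to-MHSS construction, a morphism h : z ⊗ t → t satisfies the defining MHSS diagram for the triple (z, e, f) if and only if h is a solution of the flat equation morphism eqm : z ⊗ t → (I + H(−))(z ⊗ t) + t defined as (1_z ⊗ out) · δ⁻¹ · (ρ_z + θ_{(z,e),t}) · [f · inr, inr · inl]. -/

import Mathlib

open CategoryTheory Category MonoidalCategory

section

variable {V : Type*} [Category V] [MonoidalCategory V]

/-- A pointed tensorial strength for an endofunctor `H` on a monoidal category `V`:
for each monoidal-pointed object `(z, e : I ⟶ z)` and each `x`, a morphism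
`θ_{(z,e),x} : z ⊗ H x ⟶ H (z ⊗ x)`, natural in both arguments, satisfying the unitor
law and the associator-compatibility (tensor) law. -/
structure PointedStrength (H : V ⥤ V) where
  θ : ∀ (z : V), (𝟙_ V ⟶ z) → ∀ x : V, z ⊗ H.obj x ⟶ H.obj (z ⊗ x)
  /-- naturality in the pointed-object argument -/
  nat_pt : ∀ {z z' : V} (e : 𝟙_ V ⟶ z) (e' : 𝟙_ V ⟶ z') (g : z ⟶ z'), e ≫ g = e' →
    ∀ x : V, g ▷ H.obj x ≫ θ z' e' x = θ z e x ≫ H.map (g ▷ x)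
  /-- naturality in the second argument -/
  nat_arg : ∀ (z : V) (e : 𝟙_ V ⟶ z) {x x' : V} (f : x ⟶ x'),
    z ◁ H.map f ≫ θ z e x' = θ z e x ≫ H.map (z ◁ f)
  /-- preservation of the unitor -/
  unit_law : ∀ x : V, θ (𝟙_ V) (𝟙 (𝟙_ V)) x ≫ H.map (λ_ x).hom = (λ_ (H.obj x)).hom
  /-- preservation of the actor (compatibility with the associator and the tensor of
  pointed objects) -/
  tensor_law : ∀ (z : V) (e : 𝟙_ V ⟶ z) (w : V) (e' : 𝟙_ V ⟶ w) (x : V),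
    θ (z ⊗ w) ((λ_ (𝟙_ V)).inv ≫ (e ⊗ₘ e')) x ≫ H.map (α_ z w x).hom =
      (α_ z w (H.obj x)).hom ≫ z ◁ θ w e' x ≫ θ z e (w ⊗ x)

/-- `(t, η, τ)` is a monoidal heterogeneous substitution system (MHSS) for `(V, H, θ)`:
for every `(z, e : I ⟶ z, f : z ⟶ t)` there is a unique `h : z ⊗ t ⟶ t` with
`(1_z ⊗ η) · h = ρ_z · f` and `(1_z ⊗ τ) · h = θ_{(z,e),t} · H h · τ`. -/
def IsMHSS {H : V ⥤ V} (S : PointedStrength H)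
    (t : V) (η : 𝟙_ V ⟶ t) (τ : H.obj t ⟶ t) : Prop :=
  ∀ (z : V) (e : 𝟙_ V ⟶ z) (f : z ⟶ t),
    ∃! h : z ⊗ t ⟶ t,
      z ◁ η ≫ h = (ρ_ z).hom ≫ f ∧
      z ◁ τ ≫ h = S.θ z e t ≫ H.map h ≫ τ

end

section

open Limits

variable {V : Type*} [Category V] [MonoidalCategory V] [HasBinaryCoproducts V]

/-- The endofunctor `x ↦ I ⨿ H x` (i.e. `I + H(−)`). -/
@[simps]
noncomputable def idPlus (H : V ⥤ V) : V ⥤ V where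
  obj x := (𝟙_ V) ⨿ H.obj x
  map f := coprod.map (𝟙 (𝟙_ V)) (H.map f)
  map_id x := by simp
  map_comp f g := by simp

/-- Equivalence of solution diagrams: in the setting of the final-coalgebra-to-MHSS
construction, a morphism `h : z ⊗ t ⟶ t` satisfies the defining MHSS diagram for the
triple `(z, e, f)` if and only if `h` is a solution of the flat equation morphism
`eqm := (1_z ⊗ out) · δ · (ρ_z + θ_{(z,e),t}) · [f·inr, inr·inl]` at the completely
iterative algebra `(t, out⁻¹)`. -/
theorem mhss_diagram_iff_cia_solution {H : V ⥤ V} (S : PointedStrength H)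
    -- binary coproducts distribute over the tensor in its second argument:
    (δ : ∀ v w₁ w₂ : V, v ⊗ (w₁ ⨿ w₂) ⟶ (v ⊗ w₁) ⨿ (v ⊗ w₂))
    (hδ : ∀ v w₁ w₂ : V,
      coprod.desc (v ◁ (coprod.inl : w₁ ⟶ w₁ ⨿ w₂)) (v ◁ (coprod.inr : w₂ ⟶ w₁ ⨿ w₂)) ≫
          δ v w₁ w₂ = 𝟙 _ ∧
      δ v w₁ w₂ ≫
          coprod.desc (v ◁ (coprod.inl : w₁ ⟶ w₁ ⨿ w₂)) (v ◁ (coprod.inr : w₂ ⟶ w₁ ⨿ w₂)) =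
        𝟙 _)
    (t : V) (out : t ⟶ (idPlus H).obj t)
    -- `(t, out)` is a final coalgebra of `I + H(−)`:
    (hfinal : ∀ (x : V) (c : x ⟶ (idPlus H).obj x),
      ∃! k : x ⟶ t, c ≫ (idPlus H).map k = k ≫ out)
    (η : 𝟙_ V ⟶ t) (τ : H.obj t ⟶ t)
    -- `out⁻¹ = [η, τ]`:
    (hinv₁ : out ≫ coprod.desc η τ = 𝟙 t)
    (hinv₂ : coprod.desc η τ ≫ out = 𝟙 ((idPlus H).obj t))
    (z : V) (e : 𝟙_ V ⟶ z) (f : z ⟶ t) (h : z ⊗ t ⟶ t) :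
    -- the flat equation morphism `eqm`
    letI eqm : z ⊗ t ⟶ ((idPlus H).obj (z ⊗ t)) ⨿ t :=
      z ◁ out ≫ δ z (𝟙_ V) (H.obj t) ≫
        coprod.map (ρ_ z).hom (S.θ z e t) ≫
        coprod.desc (f ≫ coprod.inr)
          ((coprod.inr : H.obj (z ⊗ t) ⟶ (𝟙_ V) ⨿ H.obj (z ⊗ t)) ≫ coprod.inl)
    -- the MHSS diagram for `h` holds iff `h` is a solution of `eqm`
    ((z ◁ η ≫ h = (ρ_ z).hom ≫ f ∧ z ◁ τ ≫ h = S.θ z e t ≫ H.map h ≫ τ) ↔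
      h = eqm ≫ coprod.map ((idPlus H).map h) (𝟙 t) ≫
        coprod.desc (coprod.desc η τ) (𝟙 t)) := by
  obtain ⟨hδ1, hδ2⟩ := hδ z (𝟙_ V) (H.obj t)
  obtain ⟨out, rfl⟩ : ∃ o : t ⟶ 𝟙_ V ⨿ H.obj t, o = out := ⟨out, rfl⟩
  replace hinv₁ : out ≫ coprod.desc η τ = 𝟙 t := hinv₁
  replace hinv₂ : coprod.desc η τ ≫ out = 𝟙 (𝟙_ V ⨿ H.obj t) := hinv₂
  have hηout : η ≫ out = coprod.inl := by
    have h0 := coprod.inl ≫= hinv₂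
    rw [coprod.inl_desc_assoc] at h0
    exact h0.trans (comp_id _)
  have hτout : τ ≫ out = coprod.inr := by
    have h0 := coprod.inr ≫= hinv₂
    rw [coprod.inr_desc_assoc] at h0
    exact h0.trans (comp_id _)
  have hδinl : z ◁ (coprod.inl : 𝟙_ V ⟶ 𝟙_ V ⨿ H.obj t) ≫ δ z (𝟙_ V) (H.obj t) =
      coprod.inl := by
    have := coprod.inl ≫= hδ1
    rw [coprod.inl_desc_assoc] at this
    simpa using this
  have hδinr : z ◁ (coprod.inr : H.obj t ⟶ 𝟙_ V ⨿ H.obj t) ≫ δ z (𝟙_ V) (H.obj t) =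
      coprod.inr := by
    have := coprod.inr ≫= hδ1
    rw [coprod.inr_desc_assoc] at this
    simpa using this
  -- simplify the RHS once and for all
  have rhs_eq :
      (z ◁ out ≫ δ z (𝟙_ V) (H.obj t) ≫
        coprod.map (ρ_ z).hom (S.θ z e t) ≫
        coprod.desc (f ≫ coprod.inr)
          ((coprod.inr : H.obj (z ⊗ t) ⟶ (𝟙_ V) ⨿ H.obj (z ⊗ t)) ≫ coprod.inl)) ≫
        coprod.map (coprod.map (𝟙 (𝟙_ V)) (H.map h)) (𝟙 t) ≫ coprod.desc (coprod.desc η τ) (𝟙 t) =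
      z ◁ out ≫ δ z (𝟙_ V) (H.obj t) ≫
        coprod.desc ((ρ_ z).hom ≫ f) (S.θ z e t ≫ H.map h ≫ τ) := by
    simp
    erw [coprod.inr_desc, coprod.inl_desc, coprod.inr_desc, comp_id]
  constructor
  · rintro ⟨h1, h2⟩
    have hmain : z ◁ out ≫ δ z (𝟙_ V) (H.obj t) ≫
        coprod.desc (z ◁ η ≫ h) (z ◁ τ ≫ h) = h := by
      rw [← coprod.desc_comp, ← assoc, ← assoc]
      have : z ◁ out ≫ δ z (𝟙_ V) (H.obj t) ≫
          coprod.desc (z ◁ η) (z ◁ τ) = 𝟙 (z ⊗ t) := by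
        have key : δ z (𝟙_ V) (H.obj t) ≫ coprod.desc (z ◁ η) (z ◁ τ) =
            z ◁ coprod.desc η τ := by
          have := hδ2 =≫ (z ◁ coprod.desc η τ)
          simp [← MonoidalCategory.whiskerLeft_comp] at this
          erw [coprod.inl_desc, coprod.inr_desc] at this
          exact this
        rw [key, ← MonoidalCategory.whiskerLeft_comp, hinv₁,
          MonoidalCategory.whiskerLeft_id]
      rw [← assoc] at this
      rw [this, id_comp]
    rw [h1, h2] at hmain
    exact hmain.symm.trans rhs_eq.symm
  · intro hsol
    replace hsol :
        h = z ◁ out ≫ δ z (𝟙_ V) (H.obj t) ≫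
          coprod.desc ((ρ_ z).hom ≫ f) (S.θ z e t ≫ H.map h ≫ τ) := hsol.trans rhs_eq
    constructor
    · calc z ◁ η ≫ h
          = z ◁ η ≫ z ◁ out ≫ δ z (𝟙_ V) (H.obj t) ≫
            coprod.desc ((ρ_ z).hom ≫ f) (S.θ z e t ≫ H.map h ≫ τ) := by rw [← hsol]
        _ = (ρ_ z).hom ≫ f := by
            rw [← assoc, ← MonoidalCategory.whiskerLeft_comp, hηout, ← assoc, hδinl]
            erw [coprod.inl_desc]
    · calc z ◁ τ ≫ h
          = z ◁ τ ≫ z ◁ out ≫ δ z (𝟙_ V) (H.obj t) ≫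
            coprod.desc ((ρ_ z).hom ≫ f) (S.θ z e t ≫ H.map h ≫ τ) := by rw [← hsol]
        _ = S.θ z e t ≫ H.map h ≫ τ := by
            rw [← assoc, ← MonoidalCategory.whiskerLeft_comp, hτout, ← assoc, hδinr]
            erw [coprod.inr_desc]

end
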